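/- Every Hermitian tensor H of order 2m on ℂ^{n_1} ⊗ ⋯ ⊗ ℂ^{n_m} is Hermitian decomposable: there exist r ∈ ℕ, real numbers λ_1,…,λ_r, and unit vectors u_i^{(k)} ∈ ℂ^{n_k} (i = 1,…,r, k = 1,…,m) such that H = Σ_{i=1}^r λ_i · u_i^{(1)} ⊗ ⋯ ⊗ u_i^{(m)} ⊗ u_i^{(1)*} ⊗ ⋯ ⊗ u_i^{(m)*}. -/
import Mathlib


lemma normalize_vec {n : ℕ} (hn : 0 < n) (a : Fin n → ℂ) :
    ∃ (c : ℂ) (x : Fin n → ℂ), (∑ i, Complex.normSq (x i) = 1) ∧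
      ∀ i j, a i * starRingEnd ℂ (a j) = c * (x i * starRingEnd ℂ (x j)) := by
  by_cases h : ∀ i, a i = 0
  · refine ⟨0, fun i => if i = ⟨0, hn⟩ then 1 else 0, ?_, ?_⟩
    · rw [Finset.sum_eq_single (⟨0, hn⟩ : Fin n)] <;> simp +contextual
    · intro i j; simp [h i]
  · push_neg at h
    obtain ⟨i0, hi0⟩ := h
    set s : ℝ := ∑ i, Complex.normSq (a i) with hs_def
    have hs : 0 < s := by
      have h1 : 0 < Complex.normSq (a i0) := Complex.normSq_pos.mpr hi0
      exact lt_of_lt_of_le h1 (Finset.single_le_sum (fun i _ => Complex.normSq_nonneg _) (Finset.mem_univ i0))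
    have hsq : (Real.sqrt s : ℂ) * (Real.sqrt s : ℂ) = (s : ℂ) := by
      rw [← Complex.ofReal_mul, Real.mul_self_sqrt hs.le]
    have hsne : ((Real.sqrt s : ℝ) : ℂ) ≠ 0 := by
      simp only [ne_eq, Complex.ofReal_eq_zero]
      positivity
    refine ⟨(s : ℂ), fun i => a i / (Real.sqrt s : ℂ), ?_, ?_⟩
    · have heach : ∀ i, Complex.normSq (a i / (Real.sqrt s : ℂ)) = Complex.normSq (a i) / s := by
        intro i
        rw [Complex.normSq_div, Complex.normSq_ofReal, Real.mul_self_sqrt hs.le]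
      simp only [heach, ← Finset.sum_div, ← hs_def]
      field_simp
    · intro i j
      rw [map_div₀, Complex.conj_ofReal, div_mul_div_comm, hsq,
        mul_div_cancel₀]
      simp only [ne_eq, Complex.ofReal_eq_zero]
      exact hs.ne'



lemma pair_decomp {n : ℕ} (hn : 0 < n) (u z : Fin n → ℂ) :
    ∃ (c : Fin 4 → ℂ) (x : Fin 4 → Fin n → ℂ),
      (∀ t, ∑ i, Complex.normSq (x t i) = 1) ∧
      ∀ i j, u i * starRingEnd ℂ (z j) = ∑ t, c t * (x t i * starRingEnd ℂ (x t j)) := by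
  obtain ⟨cA, xA, hA1, hA2⟩ := normalize_vec hn (fun i => u i + z i)
  obtain ⟨cB, xB, hB1, hB2⟩ := normalize_vec hn (fun i => u i + Complex.I * z i)
  obtain ⟨cu, xu, hu1, hu2⟩ := normalize_vec hn u
  obtain ⟨cz, xz, hz1, hz2⟩ := normalize_vec hn z
  refine ⟨![(1/2) * cA, (Complex.I/2) * cB, -((1+Complex.I)/2) * cu, -((1+Complex.I)/2) * cz],
    ![xA, xB, xu, xz], ?_, ?_⟩
  · intro t
    fin_cases t <;> simpa using (by assumption : _)
  · intro i j
    rw [Fin.sum_univ_four]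
    simp only [Matrix.cons_val_zero, Matrix.cons_val_one, Matrix.head_cons,
      Matrix.cons_val_two, Matrix.tail_cons, Matrix.cons_val_three]
    rw [mul_assoc, mul_assoc, mul_assoc, mul_assoc, ← hA2 i j, ← hB2 i j, ← hu2 i j, ← hz2 i j]
    simp only [map_add, map_mul, Complex.conj_I]
    linear_combination (u i * starRingEnd ℂ (z j) / 2 - z i * starRingEnd ℂ (u j) / 2 + z i * starRingEnd ℂ (z j) * Complex.I / 2) * Complex.I_sq



lemma prod_ite_eq_ite {m : ℕ} {n : Fin m → ℕ} (i i' : (k : Fin m) → Fin (n k)) :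
    (∏ k, if i k = i' k then (1:ℂ) else 0) = if i = i' then 1 else 0 := by
  by_cases h : i = i'
  · subst h; simp
  · rw [if_neg h]
    obtain ⟨k, hk⟩ := Function.ne_iff.mp h
    exact Finset.prod_eq_zero (Finset.mem_univ k) (if_neg hk)

lemma complex_decomp {m : ℕ} {n : Fin m → ℕ} (hn : ∀ k, 0 < n k)
    (H : ((k : Fin m) → Fin (n k)) → ((k : Fin m) → Fin (n k)) → ℂ) :
    ∃ (r : ℕ) (c : Fin r → ℂ) (u : Fin r → (k : Fin m) → Fin (n k) → ℂ),
      (∀ t k, ∑ a, Complex.normSq (u t k a) = 1) ∧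
      ∀ i j, H i j = ∑ t, c t * ((∏ k, u t k (i k)) * ∏ k, starRingEnd ℂ (u t k (j k))) := by
  have key : ∀ (k : Fin m) (a b : Fin (n k)), ∃ (c : Fin 4 → ℂ) (x : Fin 4 → Fin (n k) → ℂ),
      (∀ t, ∑ i, Complex.normSq (x t i) = 1) ∧
      ∀ p q, (if p = a then (1:ℂ) else 0) * starRingEnd ℂ (if q = b then (1:ℂ) else 0)
        = ∑ t, c t * (x t p * starRingEnd ℂ (x t q)) :=
    fun k a b => pair_decomp (hn k) (fun p => if p = a then 1 else 0) (fun q => if q = b then 1 else 0)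
  choose C X hXunit hCX using key
  set T := (((k : Fin m) → Fin (n k)) × ((k : Fin m) → Fin (n k)) × (Fin m → Fin 4)) with hT
  let e : Fin (Fintype.card T) ≃ T := (Fintype.equivFin T).symm
  refine ⟨Fintype.card T,
    fun t => H (e t).1 (e t).2.1 * ∏ k, C k ((e t).1 k) ((e t).2.1 k) ((e t).2.2 k),
    fun t k => X k ((e t).1 k) ((e t).2.1 k) ((e t).2.2 k), ?_, ?_⟩
  · intro t k
    exact hXunit k ((e t).1 k) ((e t).2.1 k) ((e t).2.2 k)
  · intro i j
    rw [Fintype.sum_bijective e e.bijective _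
      (fun p : T => (H p.1 p.2.1 * ∏ k, C k (p.1 k) (p.2.1 k) (p.2.2 k)) *
        ((∏ k, X k (p.1 k) (p.2.1 k) (p.2.2 k) (i k)) *
          ∏ k, starRingEnd ℂ (X k (p.1 k) (p.2.1 k) (p.2.2 k) (j k)))) (fun t => rfl)]
    rw [Fintype.sum_prod_type]
    simp only [Fintype.sum_prod_type]
    -- reduce inner sums
    have inner : ∀ i' j' : (k : Fin m) → Fin (n k),
        (∑ σ : Fin m → Fin 4, (H i' j' * ∏ k, C k (i' k) (j' k) (σ k)) *
          ((∏ k, X k (i' k) (j' k) (σ k) (i k)) *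
            ∏ k, starRingEnd ℂ (X k (i' k) (j' k) (σ k) (j k))))
        = H i' j' * ((if i = i' then (1:ℂ) else 0) * (if j = j' then 1 else 0)) := by
      intro i' j'
      have h1 : ∀ σ : Fin m → Fin 4,
          (H i' j' * ∏ k, C k (i' k) (j' k) (σ k)) *
          ((∏ k, X k (i' k) (j' k) (σ k) (i k)) *
            ∏ k, starRingEnd ℂ (X k (i' k) (j' k) (σ k) (j k)))
          = H i' j' * ∏ k, (C k (i' k) (j' k) (σ k) *
              (X k (i' k) (j' k) (σ k) (i k) * starRingEnd ℂ (X k (i' k) (j' k) (σ k) (j k)))) := by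
        intro σ
        rw [Finset.prod_mul_distrib, Finset.prod_mul_distrib]
        ring
      simp only [h1, ← Finset.mul_sum]
      congr 1
      rw [← Fintype.piFinset_univ]
      have h4 := Finset.prod_univ_sum (fun _ : Fin m => (Finset.univ : Finset (Fin 4)))
        (fun k t => C k (i' k) (j' k) t *
          (X k (i' k) (j' k) t (i k) * starRingEnd ℂ (X k (i' k) (j' k) t (j k))))
      rw [← h4]
      have h2 : ∀ k : Fin m, (∑ t : Fin 4, C k (i' k) (j' k) t *
          (X k (i' k) (j' k) t (i k) * starRingEnd ℂ (X k (i' k) (j' k) t (j k))))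
          = (if i k = i' k then (1:ℂ) else 0) * starRingEnd ℂ (if j k = j' k then (1:ℂ) else 0) :=
        fun k => (hCX k (i' k) (j' k) (i k) (j k)).symm
      rw [Finset.prod_congr rfl (fun k _ => h2 k)]
      have h3 : ∀ k : Fin m, (if i k = i' k then (1:ℂ) else 0) *
          starRingEnd ℂ (if j k = j' k then (1:ℂ) else 0)
          = (if i k = i' k then (1:ℂ) else 0) * (if j k = j' k then (1:ℂ) else 0) := by
        intro k
        by_cases h : j k = j' k <;> simp [h]
      rw [Finset.prod_congr rfl (fun k _ => h3 k), Finset.prod_mul_distrib,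
        prod_ite_eq_ite, prod_ite_eq_ite]
    simp only [inner]
    simp [mul_ite, ite_mul, mul_one, mul_zero, Finset.sum_ite_eq]


/-- Every Hermitian tensor `H` is Hermitian decomposable: it is a
real linear combination of rank-one Hermitian tensors
`uᵢ⁽¹⁾ ⊗ ⋯ ⊗ uᵢ⁽ᵐ⁾ ⊗ uᵢ⁽¹⁾* ⊗ ⋯ ⊗ uᵢ⁽ᵐ⁾*` with unit vectors `uᵢ⁽ᵏ⁾`. -/
theorem stmt_14 {m : ℕ} {n : Fin m → ℕ}
    (H : ((k : Fin m) → Fin (n k)) → ((k : Fin m) → Fin (n k)) → ℂ)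
    (hH : ∀ i j, H i j = starRingEnd ℂ (H j i)) :
    ∃ (r : ℕ) (lam : Fin r → ℝ) (u : Fin r → (k : Fin m) → Fin (n k) → ℂ),
      (∀ (t : Fin r) (k : Fin m), ∑ a, Complex.normSq (u t k a) = 1) ∧
      ∀ i j, H i j = ∑ t : Fin r,
        (lam t : ℂ) * ((∏ k, u t k (i k)) * ∏ k, starRingEnd ℂ (u t k (j k))) := by
  by_cases hn : ∀ k, 0 < n k
  · obtain ⟨r, c, u, hu, hdec⟩ := complex_decomp hn H
    refine ⟨r, fun t => (c t).re, u, hu, ?_⟩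
    intro i j
    have h1 := hdec i j
    have h3 : starRingEnd ℂ (H j i) = ∑ t, starRingEnd ℂ (c t) *
        ((∏ k, u t k (i k)) * ∏ k, starRingEnd ℂ (u t k (j k))) := by
      rw [hdec j i, map_sum]
      refine Finset.sum_congr rfl fun t _ => ?_
      rw [map_mul, map_mul, map_prod, map_prod]
      simp only [Complex.conj_conj]
      ring
    have h4 : H i j = (H i j + starRingEnd ℂ (H j i)) / 2 := by
      rw [← hH i j]; ring
    rw [h4, h1, h3, ← Finset.sum_add_distrib, Finset.sum_div]
    refine Finset.sum_congr rfl fun t _ => ?_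
    rw [← add_mul, Complex.add_conj]
    push_cast
    ring
  · push_neg at hn
    obtain ⟨k0, hk0⟩ := hn
    refine ⟨0, Fin.elim0, Fin.elim0, fun t => t.elim0, ?_⟩
    intro i j
    exact absurd (i k0).isLt (by omega)
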